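/- (Theorem 2, inequality part.) Let p₁,…,p_k be k pairwise spacelike separated events in ℝ × ℝⁿ. Then O(p₁,…,p_k) ≤ c(k,k) + c(k,k-1) + ⋯ + c(k,k-n), where c(k,i) is the number of permutations of a k-element set with exactly i cycles (and c(k,i) = 0 if i < 1 or i > k). -/

import Mathlib

open scoped InnerProductSpace

noncomputable section

/-- The number of cycles of a permutation of `Fin k` (fixed points count as
cycles of length one). -/
def cycleCount {k : ℕ} (σ : Equiv.Perm (Fin k)) : ℕ :=
  Multiset.card σ.cycleType + (k - σ.support.card)

/-- The signless Stirling number of the first kind `c(k, i)`: the number of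
permutations of a `k`-element set with exactly `i` cycles. -/
def stirlingFirst (k i : ℕ) : ℕ :=
  Nat.card {σ : Equiv.Perm (Fin k) // cycleCount σ = i}

namespace StirlingAux

open Equiv Equiv.Perm Finset

/-- Key cycle-extension lemma: multiplying a cycle `γ` by a transposition `swap a b`
where `a` is fixed by `γ` and `b` is moved gives a cycle with support enlarged by `a`. -/
theorem swap_mul_isCycle {α : Type*} [DecidableEq α] [Fintype α] {γ : Equiv.Perm α}
    (hγ : γ.IsCycle) {a b : α} (ha : γ a = a) (hb : γ b ≠ b) :
    (Equiv.swap a b * γ).IsCycle ∧ (Equiv.swap a b * γ).support = insert a γ.support := by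
  classical
  have hab : a ≠ b := by rintro rfl; exact hb ha
  set δ := Equiv.swap a b * γ with hδdef
  have happ : ∀ x, δ x = Equiv.swap a b (γ x) := fun x => rfl
  have hδa : δ a = b := by rw [happ, ha, Equiv.swap_apply_left]
  have hkey : ∀ y, γ y ≠ y → (γ y = b ∧ δ y = a) ∨ δ y = γ y := by
    intro y hy
    rcases eq_or_ne (γ y) b with h | h
    · exact Or.inl ⟨h, by rw [happ, h, Equiv.swap_apply_right]⟩
    · have hga : γ y ≠ a := by
        intro h'
        have hy' : y = a := γ.injective (h'.trans ha.symm)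
        exact hy (by rw [hy', ha])
      exact Or.inr (by rw [happ, Equiv.swap_apply_of_ne_of_ne hga h])
  have hfix : ∀ y, y ≠ a → γ y = y → δ y = y := by
    intro y hya hyfix
    have hyb : y ≠ b := by rintro rfl; exact hb hyfix
    rw [happ, hyfix, Equiv.swap_apply_of_ne_of_ne hya hyb]
  have hsupp : δ.support = insert a γ.support := by
    ext y
    simp only [Equiv.Perm.mem_support, Finset.mem_insert]
    constructor
    · intro h
      by_cases hy : y = a
      · exact Or.inl hy
      · exact Or.inr fun hγy => h (hfix y hy hγy)
    · rintro (rfl | hy)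
      · rw [hδa]; exact hab.symm
      · rcases hkey y hy with ⟨h1, h2⟩ | h2
        · rw [h2]
          rintro rfl
          exact hy ha
        · rw [h2]; exact hy
  refine ⟨⟨b, ?_, ?_⟩, hsupp⟩
  · rcases hkey b hb with ⟨h1, _⟩ | h2
    · exact absurd h1 hb
    · rw [h2]; exact hb
  · -- every moved point is on the cycle of b
    have hpow : ∀ m : ℕ, δ.SameCycle b ((γ ^ m) b) := by
      intro m
      induction m with
      | zero => simpa using Equiv.Perm.SameCycle.refl δ b
      | succ m ihm =>
        have hz : (γ ^ (m + 1)) b = γ ((γ ^ m) b) := by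
          rw [pow_succ']; rfl
        have hzsupp : γ ((γ ^ m) b) ≠ (γ ^ m) b := by
          have : (γ ^ m) b ∈ γ.support :=
            Equiv.Perm.pow_apply_mem_support.2 (Equiv.Perm.mem_support.2 hb)
          exact Equiv.Perm.mem_support.1 this
        rcases hkey _ hzsupp with ⟨h1, _⟩ | h2
        · rw [hz, h1]
        · rw [hz, ← h2]
          exact ihm.trans ⟨1, by simp⟩
    have hsc : ∀ y, γ y ≠ y → δ.SameCycle b y := by
      intro y hy
      obtain ⟨m, -, -, hm⟩ := (hγ.sameCycle hb hy).exists_pow_eq γ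
      rw [← hm]; exact hpow m
    intro y hy
    have hymem : y ∈ δ.support := Equiv.Perm.mem_support.2 hy
    rw [hsupp, Finset.mem_insert] at hymem
    rcases hymem with hya | hymem
    · -- y = a : connect b to a through γ⁻¹ b
      have hkey2 : ∀ z, γ z = b → δ z = a := fun z h => by
        rw [happ, h, Equiv.swap_apply_right]
      have hinvb : γ (γ⁻¹ b) = b := γ.apply_symm_apply b
      have hinvne : γ (γ⁻¹ b) ≠ γ⁻¹ b := by
        rw [hinvb]
        intro h
        have : γ b = b := by nth_rewrite 1 [h]; exact hinvb
        exact hb this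
      have h1 : δ.SameCycle b (γ⁻¹ b) := hsc _ hinvne
      have h2 : δ (γ⁻¹ b) = a := hkey2 _ hinvb
      rw [hya]
      exact h1.trans ⟨1, by simpa using h2⟩
    · exact hsc y (Equiv.Perm.mem_support.1 hymem)
/-- Extend a permutation of `Fin k` to `Fin (k+1)` fixing the last element. -/
def extLast {k : ℕ} (σ : Equiv.Perm (Fin k)) : Equiv.Perm (Fin (k + 1)) :=
  σ.extendDomain (finSuccAboveEquiv (Fin.last k))

theorem extLast_castSucc {k : ℕ} (σ : Equiv.Perm (Fin k)) (i : Fin k) :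
    extLast σ i.castSucc = (σ i).castSucc := by
  have h : ∀ j : Fin k, ((finSuccAboveEquiv (Fin.last k)) j : Fin (k + 1)) = j.castSucc := by
    intro j
    rw [finSuccAboveEquiv_apply]
    exact Fin.succAbove_last_apply j
  rw [← h i, ← h (σ i), extLast]
  exact Equiv.Perm.extendDomain_apply_image σ _ i

theorem extLast_last {k : ℕ} (σ : Equiv.Perm (Fin k)) :
    extLast σ (Fin.last k) = Fin.last k :=
  Equiv.Perm.extendDomain_apply_not_subtype σ _ (by simp)

theorem extLast_injective {k : ℕ} : Function.Injective (extLast (k := k)) := by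
  intro σ₁ σ₂ h
  apply Equiv.ext
  intro i
  have := Equiv.ext_iff.1 h i.castSucc
  rw [extLast_castSucc, extLast_castSucc] at this
  exact Fin.castSucc_injective k this

theorem cycleType_extLast {k : ℕ} (σ : Equiv.Perm (Fin k)) :
    (extLast σ).cycleType = σ.cycleType :=
  Equiv.Perm.cycleType_extendDomain _

theorem card_support_le' {k : ℕ} (σ : Equiv.Perm (Fin k)) : σ.support.card ≤ k := by
  simpa using Finset.card_le_univ σ.support

theorem cycleCount_extLast {k : ℕ} (σ : Equiv.Perm (Fin k)) :
    cycleCount (extLast σ) = cycleCount σ + 1 := by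
  have h1 : (extLast σ).support.card = σ.support.card := by
    rw [← Equiv.Perm.sum_cycleType, ← Equiv.Perm.sum_cycleType, cycleType_extLast]
  have h2 := card_support_le' σ
  rw [cycleCount, cycleCount, cycleType_extLast, h1]
  omega

theorem last_not_mem_support {k : ℕ} (σ : Equiv.Perm (Fin k)) :
    Fin.last k ∉ (extLast σ).support := by
  rw [Equiv.Perm.mem_support, not_not]
  exact extLast_last σ

theorem card_support_extLast_le {k : ℕ} (σ : Equiv.Perm (Fin k)) :
    (extLast σ).support.card ≤ k := by
  have hsub : (extLast σ).support ⊆ Finset.univ.erase (Fin.last k) := fun x hx =>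
    Finset.mem_erase.2 ⟨fun h => last_not_mem_support σ (h ▸ hx), Finset.mem_univ x⟩
  have := Finset.card_le_card hsub
  rwa [Finset.card_erase_of_mem (Finset.mem_univ _), Finset.card_univ, Fintype.card_fin,
    Nat.add_sub_cancel] at this

theorem cycleCount_swap_mul_extLast {k : ℕ} (σ : Equiv.Perm (Fin k)) (p : Fin k) :
    cycleCount (Equiv.swap (Fin.last k) p.castSucc * extLast σ) = cycleCount σ := by
  classical
  set A := Fin.last k
  set B := p.castSucc
  set τ := extLast σ with hτdef
  have hAB : A ≠ B := (Fin.castSucc_lt_last p).ne'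
  have hτA : τ A = A := extLast_last σ
  have hsuppτ : τ.support.card = σ.support.card := by
    rw [← Equiv.Perm.sum_cycleType, ← Equiv.Perm.sum_cycleType, hτdef, cycleType_extLast]
  have hcardτ : τ.support.card ≤ k := card_support_extLast_le σ
  by_cases hB : τ B = B
  · -- disjoint case
    have hdisj : (Equiv.swap A B).Disjoint τ := by
      intro x
      rcases eq_or_ne x A with rfl | hxA
      · exact Or.inr hτA
      rcases eq_or_ne x B with rfl | hxB
      · exact Or.inr hB
      · exact Or.inl (Equiv.swap_apply_of_ne_of_ne hxA hxB)
    have hct : (Equiv.swap A B * τ).cycleType = (Equiv.swap A B).cycleType + τ.cycleType :=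
      Equiv.Perm.Disjoint.cycleType_mul hdisj
    have hswct : (Equiv.swap A B).cycleType = {2} := by
      rw [(Equiv.Perm.isCycle_swap hAB).cycleType, Equiv.Perm.card_support_swap hAB]
    have hBs : B ∉ τ.support := by rw [Equiv.Perm.mem_support, not_not]; exact hB
    have hAs : A ∉ τ.support := last_not_mem_support σ
    have hcards : σ.support.card ≤ k - 1 := by
      have hsub : τ.support ⊆ (Finset.univ.erase B).erase A := fun x hx =>
        Finset.mem_erase.2 ⟨fun h => hAs (h ▸ hx),
          Finset.mem_erase.2 ⟨fun h => hBs (h ▸ hx), Finset.mem_univ x⟩⟩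
      have h1 := Finset.card_le_card hsub
      have h2 : ((Finset.univ.erase B).erase A).card = k - 1 := by
        rw [Finset.card_erase_of_mem (Finset.mem_erase.2 ⟨hAB, Finset.mem_univ _⟩),
          Finset.card_erase_of_mem (Finset.mem_univ _), Finset.card_univ, Fintype.card_fin]
        omega
      rw [← hsuppτ]
      omega
    have hk1 : 1 ≤ k := p.pos
    have hc' : Multiset.card (Equiv.swap A B * τ).cycleType = 1 + Multiset.card σ.cycleType := by
      rw [hct, hswct, hτdef, cycleType_extLast]
      simp [add_comm]
    have hs' : (Equiv.swap A B * τ).support.card = 2 + σ.support.card := by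
      rw [← Equiv.Perm.sum_cycleType, hct, hswct, Multiset.sum_add, Equiv.Perm.sum_cycleType,
        hsuppτ]
      simp
    rw [cycleCount, cycleCount, hc', hs']
    omega
  · -- B is moved by τ : cycle surgery
    set γ := τ.cycleOf B with hγdef
    have hmem : γ ∈ τ.cycleFactorsFinset :=
      Equiv.Perm.cycleOf_mem_cycleFactorsFinset_iff.2 (Equiv.Perm.mem_support.2 hB)
    have hcyc : γ.IsCycle := Equiv.Perm.isCycle_cycleOf τ hB
    have hγB : γ B ≠ B := by rw [hγdef, Equiv.Perm.cycleOf_apply_self]; exact hB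
    have hγA : γ A = A := by
      rw [hγdef, Equiv.Perm.cycleOf_apply]
      split_ifs with h
      · exact hτA
      · rfl
    set ρ := τ * γ⁻¹ with hρdef
    have hdisjργ : ρ.Disjoint γ := Equiv.Perm.disjoint_mul_inv_of_mem_cycleFactorsFinset hmem
    have hτeq : τ = γ * ρ := by
      rw [hρdef, ← hdisjργ.commute.eq, inv_mul_cancel_right]
    have hδ := swap_mul_isCycle hcyc hγA hγB
    have hAsuppγ : A ∉ γ.support := by
      rw [Equiv.Perm.mem_support, not_not]; exact hγA
    have heq : Equiv.swap A B * τ = (Equiv.swap A B * γ) * ρ := by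
      rw [hτeq, mul_assoc]
    have hρA : ρ A = A := by
      have hγiA : γ⁻¹ A = A := (Equiv.Perm.inv_eq_iff_eq).2 hγA.symm
      rw [hρdef, Equiv.Perm.mul_apply, hγiA, hτA]
    have hdisj2 : (Equiv.swap A B * γ).Disjoint ρ := by
      intro x
      by_cases hx : (Equiv.swap A B * γ) x = x
      · exact Or.inl hx
      · have hxmem : x ∈ (Equiv.swap A B * γ).support := Equiv.Perm.mem_support.2 hx
        rw [hδ.2, Finset.mem_insert] at hxmem
        rcases hxmem with rfl | hxmem
        · exact Or.inr hρA
        · rcases hdisjργ x with h | h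
          · exact Or.inr h
          · exact absurd (Equiv.Perm.mem_support.1 hxmem) (not_not.2 h)
    have hct1 : (Equiv.swap A B * τ).cycleType = {(Equiv.swap A B * γ).support.card} + ρ.cycleType := by
      rw [heq, Equiv.Perm.Disjoint.cycleType_mul hdisj2, (hδ.1).cycleType]
    have hct2 : τ.cycleType = {γ.support.card} + ρ.cycleType := by
      rw [hτeq, Equiv.Perm.Disjoint.cycleType_mul hdisjργ.symm, hcyc.cycleType]
    have hsuppδ : (Equiv.swap A B * γ).support.card = γ.support.card + 1 := by
      rw [hδ.2, Finset.card_insert_of_notMem hAsuppγ]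
    have hsum1 : (Equiv.swap A B * τ).support.card = τ.support.card + 1 := by
      rw [← Equiv.Perm.sum_cycleType, ← Equiv.Perm.sum_cycleType, hct1, hct2,
        Multiset.sum_add, Multiset.sum_add, hsuppδ]
      simp [add_assoc, add_comm, add_left_comm]
    have hcard1 : Multiset.card (Equiv.swap A B * τ).cycleType = Multiset.card τ.cycleType := by
      rw [hct1, hct2]; simp
    have hcc : Multiset.card τ.cycleType = Multiset.card σ.cycleType := by
      rw [hτdef, cycleType_extLast]
    rw [cycleCount, cycleCount, hcard1, hsum1, hcc, hsuppτ]
    have := card_support_le' σ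
    omega

theorem stirling_rec_le (k j : ℕ) :
    stirlingFirst k j + k * stirlingFirst k (j + 1) ≤ stirlingFirst (k + 1) (j + 1) := by
  classical
  have key := Nat.card_le_card_of_injective
    (α := {σ : Equiv.Perm (Fin k) // cycleCount σ = j} ⊕
      (Fin k × {σ : Equiv.Perm (Fin k) // cycleCount σ = j + 1}))
    (β := {σ' : Equiv.Perm (Fin (k + 1)) // cycleCount σ' = j + 1})
    (Sum.elim
      (fun x => ⟨extLast x.1, by rw [cycleCount_extLast, x.2]⟩)
      (fun pq => ⟨Equiv.swap (Fin.last k) pq.1.castSucc * extLast pq.2.1, by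
        rw [cycleCount_swap_mul_extLast, pq.2.2]⟩))
    ?_
  · rw [Nat.card_sum, Nat.card_prod] at key
    simpa [stirlingFirst, Nat.card_eq_fintype_card] using key
  · rintro (x | px) (y | py) h <;> simp only [Sum.elim_inl, Sum.elim_inr, Subtype.mk.injEq] at h
    · exact congrArg Sum.inl (Subtype.ext (extLast_injective h))
    · exfalso
      have := Equiv.ext_iff.1 h (Fin.last k)
      rw [extLast_last, Equiv.Perm.mul_apply, extLast_last, Equiv.swap_apply_left] at this
      exact (Fin.castSucc_lt_last py.1).ne' this
    · exfalso
      have := Equiv.ext_iff.1 h (Fin.last k)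
      rw [extLast_last, Equiv.Perm.mul_apply, extLast_last, Equiv.swap_apply_left] at this
      exact (Fin.castSucc_lt_last px.1).ne this
    · have hlast := Equiv.ext_iff.1 h (Fin.last k)
      rw [Equiv.Perm.mul_apply, extLast_last, Equiv.swap_apply_left,
        Equiv.Perm.mul_apply, extLast_last, Equiv.swap_apply_left] at hlast
      have hp : px.1 = py.1 := Fin.castSucc_injective k hlast
      rw [hp] at h
      have hσ : px.2.1 = py.2.1 := extLast_injective (mul_left_cancel h)
      have : px = py := by
        rcases px with ⟨p₁, σ₁⟩; rcases py with ⟨p₂, σ₂⟩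
        simp only at hp hσ
        simp [hp, Subtype.ext hσ]
      rw [this]

theorem stirlingFirst_zero {k : ℕ} (hk : k ≠ 0) : stirlingFirst k 0 = 0 := by
  have : IsEmpty {σ : Equiv.Perm (Fin k) // cycleCount σ = 0} := by
    refine ⟨fun x => ?_⟩
    rcases x with ⟨σ, hσ⟩
    rw [cycleCount] at hσ
    have h1 : Multiset.card σ.cycleType = 0 := by omega
    have h2 : σ = 1 := Equiv.Perm.card_cycleType_eq_zero.1 h1
    rw [h2] at hσ
    simp [Equiv.Perm.cycleType_one] at hσ
    omega
  simp [stirlingFirst, Nat.card_of_isEmpty]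

theorem stirling_sum_step {k n : ℕ} (hk : 1 ≤ k) :
    (∑ i ∈ Finset.range (n + 1), stirlingFirst k (k - i)) +
      k * ∑ i ∈ Finset.range n, stirlingFirst k (k - i) ≤
    ∑ i ∈ Finset.range (n + 1), stirlingFirst (k + 1) (k + 1 - i) := by
  have h1 : ∀ i : ℕ, stirlingFirst k (k - i) + k * stirlingFirst k (k + 1 - i) ≤
      stirlingFirst (k + 1) (k + 1 - i) := by
    intro i
    rcases le_or_gt i k with h | h
    · have he : k + 1 - i = (k - i) + 1 := by omega
      rw [he]
      exact stirling_rec_le k (k - i)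
    · have e1 : k - i = 0 := by omega
      have e2 : k + 1 - i = 0 := by omega
      rw [e1, e2, stirlingFirst_zero (by omega : k ≠ 0),
        stirlingFirst_zero (by omega : k + 1 ≠ 0)]
      simp [stirlingFirst_zero (by omega : k ≠ 0)]
  calc (∑ i ∈ Finset.range (n + 1), stirlingFirst k (k - i)) +
        k * ∑ i ∈ Finset.range n, stirlingFirst k (k - i)
      ≤ (∑ i ∈ Finset.range (n + 1), stirlingFirst k (k - i)) +
        k * ∑ i ∈ Finset.range (n + 1), stirlingFirst k (k + 1 - i) := by
        refine Nat.add_le_add_left (Nat.mul_le_mul_left k ?_) _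
        rw [Finset.sum_range_succ']
        simp only [Nat.succ_sub_succ]
        exact Nat.le_add_right _ _
    _ = ∑ i ∈ Finset.range (n + 1),
          (stirlingFirst k (k - i) + k * stirlingFirst k (k + 1 - i)) := by
        rw [Finset.sum_add_distrib, Finset.mul_sum]
    _ ≤ ∑ i ∈ Finset.range (n + 1), stirlingFirst (k + 1) (k + 1 - i) :=
        Finset.sum_le_sum fun i _ => h1 i

variable {k : ℕ}

/-- Delete the value `Fin.last k` from a permutation of `Fin (k+1)`, producing the
induced permutation of `Fin k` (positions relative to the slot of `last`). -/
def restrictPerm (π : Equiv.Perm (Fin (k + 1))) : Equiv.Perm (Fin k) :=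
  (finSuccAboveEquiv (π.symm (Fin.last k))).trans
    ((π.subtypeEquiv fun _ => not_congr (Equiv.eq_symm_apply π)).trans
      (finSuccAboveEquiv (Fin.last k)).symm)

theorem castSucc_restrictPerm (π : Equiv.Perm (Fin (k + 1))) (j : Fin k) :
    Fin.castSucc (restrictPerm π j) = π ((π.symm (Fin.last k)).succAbove j) := by
  have h1 : ∀ x : Fin k, Fin.castSucc x = ((finSuccAboveEquiv (Fin.last k)) x : Fin (k + 1)) := by
    intro x
    rw [finSuccAboveEquiv_apply]
    exact (Fin.succAbove_last_apply x).symm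
  rw [h1, restrictPerm]
  simp only [Equiv.trans_apply, Equiv.apply_symm_apply, Equiv.subtypeEquiv_apply,
    finSuccAboveEquiv_apply]

theorem restrictPerm_eq_of (π₁ π₂ : Equiv.Perm (Fin (k + 1)))
    (h : restrictPerm π₁ = restrictPerm π₂)
    (hs : π₁.symm (Fin.last k) = π₂.symm (Fin.last k)) : π₁ = π₂ := by
  apply Equiv.ext
  intro m
  by_cases hm : m = π₁.symm (Fin.last k)
  · have hl : π₁ (π₁.symm (Fin.last k)) = Fin.last k := π₁.apply_symm_apply _
    have hr : π₂ (π₁.symm (Fin.last k)) = Fin.last k := by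
      rw [hs]; exact π₂.apply_symm_apply _
    rw [hm, hl, hr]
  · obtain ⟨j, hj⟩ := Fin.exists_succAbove_eq hm
    rw [← hj, ← castSucc_restrictPerm π₁ j, h, hs, castSucc_restrictPerm π₂ j]

/-- Achievability of an order of affine functionals, without a ball constraint. -/
def AchGen {V : Type} [NormedAddCommGroup V] [InnerProductSpace ℝ V] {k : ℕ}
    (a : Fin k → ℝ) (b : Fin k → V) (π : Equiv.Perm (Fin k)) : Prop :=
  ∃ v : V, StrictMono fun m : Fin k => a (π m) + ⟪b (π m), v⟫_ℝ

theorem achGen_card_le (k : ℕ) :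
    ∀ (V : Type) [NormedAddCommGroup V] [InnerProductSpace ℝ V] [FiniteDimensional ℝ V]
      (a : Fin k → ℝ) (b : Fin k → V),
      Nat.card {π : Equiv.Perm (Fin k) // AchGen a b π} ≤
        ∑ i ∈ Finset.range (Module.finrank ℝ V + 1), stirlingFirst k (k - i) := by
  induction k with
  | zero =>
    intro V _ _ _ a b
    have h1 : Nat.card {π : Equiv.Perm (Fin 0) // AchGen a b π} ≤ 1 := by
      have h := Nat.card_le_card_of_injective (Subtype.val :
        {π : Equiv.Perm (Fin 0) // AchGen a b π} → Equiv.Perm (Fin 0)) Subtype.val_injective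
      have hcard : Nat.card (Equiv.Perm (Fin 0)) = 1 := by
        rw [Nat.card_eq_fintype_card]; simp
      rw [hcard] at h
      exact h
    refine h1.trans ?_
    have h0 : stirlingFirst 0 (0 - 0) = 1 := by
      have hall : ∀ σ : Equiv.Perm (Fin 0), cycleCount σ = 0 - 0 := by
        intro σ
        have hσ : σ = 1 := Equiv.ext fun i => i.elim0
        simp [hσ, cycleCount, Equiv.Perm.cycleType_one]
      rw [stirlingFirst, Nat.card_congr (Equiv.subtypeUnivEquiv hall), Nat.card_eq_fintype_card]
      simp
    calc (1 : ℕ) = stirlingFirst 0 (0 - 0) := h0.symm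
      _ ≤ _ := Finset.single_le_sum (f := fun i => stirlingFirst 0 (0 - i))
          (fun i _ => Nat.zero_le _) (Finset.mem_range.2 (Nat.succ_pos _))
  | succ k ih =>
    intro V _ _ _ a b
    classical
    by_cases hk0 : k = 0
    · subst hk0
      have h1 : Nat.card {π : Equiv.Perm (Fin 1) // AchGen a b π} ≤ 1 := by
        have h := Nat.card_le_card_of_injective (Subtype.val :
          {π : Equiv.Perm (Fin 1) // AchGen a b π} → Equiv.Perm (Fin 1)) Subtype.val_injective
        have hcard : Nat.card (Equiv.Perm (Fin 1)) = 1 := by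
          rw [Nat.card_eq_fintype_card]; simp
        rw [hcard] at h
        exact h
      refine h1.trans ?_
      have h0 : stirlingFirst 1 (1 - 0) = 1 := by
        have hall : ∀ σ : Equiv.Perm (Fin 1), cycleCount σ = 1 - 0 := by
          intro σ
          have hσ : σ = 1 := Equiv.ext fun i => Subsingleton.elim _ _
          simp [hσ, cycleCount, Equiv.Perm.cycleType_one]
        rw [stirlingFirst, Nat.card_congr (Equiv.subtypeUnivEquiv hall), Nat.card_eq_fintype_card]
        simp
      calc (1 : ℕ) = stirlingFirst 1 (1 - 0) := h0.symm
        _ ≤ _ := Finset.single_le_sum (f := fun i => stirlingFirst 1 (1 - i))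
            (fun i _ => Nat.zero_le _) (Finset.mem_range.2 (Nat.succ_pos _))
    · -- main case : at least two events
      set Cut : Fin k → Equiv.Perm (Fin k) → Prop := fun i π' =>
        b i.castSucc ≠ b (Fin.last k) ∧ ∃ w : V,
          (StrictMono fun m : Fin k =>
            a ((π' m).castSucc) + ⟪b ((π' m).castSucc), w⟫_ℝ) ∧
          a i.castSucc + ⟪b i.castSucc, w⟫_ℝ =
            a (Fin.last k) + ⟪b (Fin.last k), w⟫_ℝ with hCut
      have hrest : ∀ (π : Equiv.Perm (Fin (k + 1))) (v : V),
          (StrictMono fun m : Fin (k + 1) => a (π m) + ⟪b (π m), v⟫_ℝ) →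
          StrictMono fun m : Fin k =>
            a ((restrictPerm π m).castSucc) + ⟪b ((restrictPerm π m).castSucc), v⟫_ℝ := by
        intro π v h
        have hfun : (fun m : Fin k =>
            a ((restrictPerm π m).castSucc) + ⟪b ((restrictPerm π m).castSucc), v⟫_ℝ) =
            fun m : Fin k => a (π ((π.symm (Fin.last k)).succAbove m)) +
              ⟪b (π ((π.symm (Fin.last k)).succAbove m)), v⟫_ℝ := by
          funext m
          rw [castSucc_restrictPerm]
        rw [hfun]
        exact fun x y hxy => h (Fin.strictMono_succAbove _ hxy)
      have hachrest : ∀ π : Equiv.Perm (Fin (k + 1)), AchGen a b π →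
          AchGen (fun j : Fin k => a j.castSucc) (fun j : Fin k => b j.castSucc)
            (restrictPerm π) := by
        rintro π ⟨v, hv⟩
        exact ⟨v, hrest π v hv⟩
      have cut_key : ∀ (π₁ π₂ : Equiv.Perm (Fin (k + 1))) (v₁ v₂ : V),
          (StrictMono fun m : Fin (k + 1) => a (π₁ m) + ⟪b (π₁ m), v₁⟫_ℝ) →
          (StrictMono fun m : Fin (k + 1) => a (π₂ m) + ⟪b (π₂ m), v₂⟫_ℝ) →
          restrictPerm π₁ = restrictPerm π₂ →
          π₁.symm (Fin.last k) < π₂.symm (Fin.last k) →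
          ∀ hj : ((π₂.symm (Fin.last k) : ℕ) - 1) < k,
            Cut (restrictPerm π₂ ⟨(π₂.symm (Fin.last k) : ℕ) - 1, hj⟩) (restrictPerm π₂) := by
        intro π₁ π₂ v₁ v₂ h₁ h₂ hres hlt hj
        have hslt : ((π₁.symm (Fin.last k) : Fin (k + 1)) : ℕ) < (π₂.symm (Fin.last k) : ℕ) := hlt
        set j : Fin k := ⟨(π₂.symm (Fin.last k) : ℕ) - 1, hj⟩ with hjdef
        set i : Fin k := restrictPerm π₂ j with hidef
        have hcs : Fin.castSucc j < π₂.symm (Fin.last k) := by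
          rw [Fin.lt_iff_val_lt_val]
          show ((π₂.symm (Fin.last k) : ℕ) - 1) < ((π₂.symm (Fin.last k) : ℕ))
          omega
        have hA : (π₂.symm (Fin.last k)).succAbove j = Fin.castSucc j :=
          Fin.succAbove_of_castSucc_lt _ _ hcs
        have hB : (π₁.symm (Fin.last k)).succAbove j = j.succ := by
          apply Fin.succAbove_of_le_castSucc
          rw [Fin.le_iff_val_le_val]
          show ((π₁.symm (Fin.last k) : ℕ)) ≤ ((π₂.symm (Fin.last k) : ℕ) - 1)
          omega
        have hπ₂s : π₂ (π₂.symm (Fin.last k)) = Fin.last k := π₂.apply_symm_apply _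
        have hπ₁s : π₁ (π₁.symm (Fin.last k)) = Fin.last k := π₁.apply_symm_apply _
        have hiv : i.castSucc = π₂ (Fin.castSucc j) := by
          rw [hidef, castSucc_restrictPerm, hA]
        have hiv₁ : i.castSucc = π₁ j.succ := by
          rw [hidef, ← hres, castSucc_restrictPerm, hB]
        have hG₂ : a i.castSucc + ⟪b i.castSucc, v₂⟫_ℝ <
            a (Fin.last k) + ⟪b (Fin.last k), v₂⟫_ℝ := by
          have h := h₂ hcs
          dsimp only at h
          rw [hπ₂s, ← hiv] at h
          exact h
        have hsucclt : π₁.symm (Fin.last k) < j.succ := by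
          rw [Fin.lt_iff_val_lt_val]
          show ((π₁.symm (Fin.last k) : ℕ)) < ((π₂.symm (Fin.last k) : ℕ) - 1) + 1
          omega
        have hG₁ : a (Fin.last k) + ⟪b (Fin.last k), v₁⟫_ℝ <
            a i.castSucc + ⟪b i.castSucc, v₁⟫_ℝ := by
          have h := h₁ hsucclt
          dsimp only at h
          rw [hπ₁s, ← hiv₁] at h
          exact h
        simp only [hCut]
        set G : V → ℝ := fun w =>
          (a (Fin.last k) + ⟪b (Fin.last k), w⟫_ℝ) -
            (a i.castSucc + ⟪b i.castSucc, w⟫_ℝ) with hGdef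
        have hG1' : G v₁ < 0 := sub_neg.mpr hG₁
        have hG2' : 0 < G v₂ := sub_pos.mpr hG₂
        constructor
        · intro hbe
          have e1 : G v₁ = a (Fin.last k) - a i.castSucc := by
            simp only [hGdef, hbe]; ring
          have e2 : G v₂ = a (Fin.last k) - a i.castSucc := by
            simp only [hGdef, hbe]; ring
          rw [e1] at hG1'
          rw [e2] at hG2'
          linarith
        · have hgen : ∀ g₁ g₂ : ℝ, g₁ < 0 → 0 < g₂ →
              0 < g₁ / (g₁ - g₂) ∧ 0 < 1 - g₁ / (g₁ - g₂) ∧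
                (1 - g₁ / (g₁ - g₂)) * g₁ + (g₁ / (g₁ - g₂)) * g₂ = 0 := by
            intro g₁ g₂ hg1 hg2
            have hd : g₁ - g₂ < 0 := by linarith
            have hd' : g₁ - g₂ ≠ 0 := ne_of_lt hd
            refine ⟨div_pos_of_neg_of_neg hg1 hd, ?_, by field_simp; ring⟩
            have h1θ : 1 - g₁ / (g₁ - g₂) = (-g₂) / (g₁ - g₂) := by
              field_simp
              ring
            rw [h1θ]
            exact div_pos_of_neg_of_neg (by linarith) hd
          obtain ⟨hθ0, h1θpos, hzero⟩ := hgen (G v₁) (G v₂) hG1' hG2'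
          set θ : ℝ := G v₁ / (G v₁ - G v₂) with hθ
          have haff : ∀ i' : Fin (k + 1), a i' + ⟪b i', v₁ + θ • (v₂ - v₁)⟫_ℝ =
              (1 - θ) * (a i' + ⟪b i', v₁⟫_ℝ) + θ * (a i' + ⟪b i', v₂⟫_ℝ) := by
            intro i'
            rw [inner_add_right, real_inner_smul_right, inner_sub_right]
            ring
          refine ⟨v₁ + θ • (v₂ - v₁), ?_, ?_⟩
          · intro x y hxy
            have e₁ := hrest π₁ v₁ h₁
            rw [hres] at e₁
            have e₂ := hrest π₂ v₂ h₂
            have l₁ := e₁ hxy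
            have l₂ := e₂ hxy
            simp only []
            rw [haff, haff]
            exact add_lt_add (mul_lt_mul_of_pos_left l₁ h1θpos) (mul_lt_mul_of_pos_left l₂ hθ0)
          · rw [haff, haff]
            simp only [hGdef] at hzero
            linear_combination (-1 : ℝ) * hzero
      -- the injection
      set Small : Equiv.Perm (Fin (k + 1)) → Prop := fun π =>
        ∃ π₀ : Equiv.Perm (Fin (k + 1)), AchGen a b π₀ ∧ restrictPerm π₀ = restrictPerm π ∧
          π₀.symm (Fin.last k) < π.symm (Fin.last k) with hSmall
      have hjlt : ∀ π : Equiv.Perm (Fin (k + 1)), Small π →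
          ((π.symm (Fin.last k) : ℕ) - 1) < k := by
        intro π hsm
        rw [hSmall] at hsm
        obtain ⟨π₀, -, -, hlt⟩ := hsm
        have h1 : (π₀.symm (Fin.last k) : ℕ) < (π.symm (Fin.last k) : ℕ) := hlt
        have h2 : (π.symm (Fin.last k) : ℕ) < k + 1 := (π.symm (Fin.last k)).isLt
        omega
      have hspos : ∀ π : Equiv.Perm (Fin (k + 1)), Small π →
          1 ≤ (π.symm (Fin.last k) : ℕ) := by
        intro π hsm
        rw [hSmall] at hsm
        obtain ⟨π₀, -, -, hlt⟩ := hsm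
        have h1 : (π₀.symm (Fin.last k) : ℕ) < (π.symm (Fin.last k) : ℕ) := hlt
        omega
      have mkCut : ∀ (π : Equiv.Perm (Fin (k + 1))), AchGen a b π → ∀ hsm : Small π,
          Cut (restrictPerm π ⟨(π.symm (Fin.last k) : ℕ) - 1, hjlt π hsm⟩)
            (restrictPerm π) := by
        intro π hach hsm
        obtain ⟨v, hv⟩ := hach
        have hsm' := hsm
        rw [hSmall] at hsm'
        obtain ⟨π₀, hach₀, hres₀, hlt₀⟩ := hsm'
        obtain ⟨v₀, hv₀⟩ := hach₀
        exact cut_key π₀ π v₀ v hv₀ hv hres₀ hlt₀ (hjlt π hsm)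
      have hcard1 : Nat.card {π : Equiv.Perm (Fin (k + 1)) // AchGen a b π} ≤
          Nat.card ({π' : Equiv.Perm (Fin k) //
              AchGen (fun j : Fin k => a j.castSucc) (fun j : Fin k => b j.castSucc) π'} ⊕
            (Σ i : Fin k, {π' : Equiv.Perm (Fin k) // Cut i π'})) := by
        apply Nat.card_le_card_of_injective (fun x =>
          if hsm : Small x.1 then
            Sum.inr ⟨restrictPerm x.1 ⟨(x.1.symm (Fin.last k) : ℕ) - 1, hjlt x.1 hsm⟩,
              ⟨restrictPerm x.1, mkCut x.1 x.2 hsm⟩⟩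
          else Sum.inl ⟨restrictPerm x.1, hachrest x.1 x.2⟩)
        intro x y hxy
        dsimp only at hxy
        by_cases hsx : Small x.1
        case neg =>
          rw [dif_neg hsx] at hxy
          by_cases hsy : Small y.1
          case pos =>
            rw [dif_pos hsy] at hxy
            exact absurd hxy (by simp)
          case neg =>
            rw [dif_neg hsy] at hxy
            have h2 : restrictPerm x.1 = restrictPerm y.1 :=
              congrArg Subtype.val (Sum.inl_injective hxy)
            have hxley : ¬ (y.1.symm (Fin.last k) < x.1.symm (Fin.last k)) := fun hlt =>
              hsx (by rw [hSmall]; exact ⟨y.1, y.2, h2.symm, hlt⟩)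
            have hylex : ¬ (x.1.symm (Fin.last k) < y.1.symm (Fin.last k)) := fun hlt =>
              hsy (by rw [hSmall]; exact ⟨x.1, x.2, h2, hlt⟩)
            have h4 : x.1.symm (Fin.last k) = y.1.symm (Fin.last k) :=
              le_antisymm (not_lt.1 hxley) (not_lt.1 hylex)
            exact Subtype.ext (restrictPerm_eq_of x.1 y.1 h2 h4)
        case pos =>
          rw [dif_pos hsx] at hxy
          by_cases hsy : Small y.1
          case neg =>
            rw [dif_neg hsy] at hxy
            exact absurd hxy (by simp)
          case pos =>
          rw [dif_pos hsy] at hxy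
          have hAB := Sum.inr_injective hxy
          have h2 : restrictPerm x.1 = restrictPerm y.1 :=
            congrArg (fun z : (Σ i : Fin k, {π' : Equiv.Perm (Fin k) // Cut i π'}) =>
              (z.2 : {π' : Equiv.Perm (Fin k) // Cut z.1 π'}).1) hAB
          have h1 : restrictPerm x.1 ⟨(x.1.symm (Fin.last k) : ℕ) - 1, hjlt x.1 hsx⟩ =
              restrictPerm y.1 ⟨(y.1.symm (Fin.last k) : ℕ) - 1, hjlt y.1 hsy⟩ :=
            congrArg Sigma.fst hAB
          rw [← h2] at h1
          have h3 : ((x.1.symm (Fin.last k) : ℕ) - 1) = ((y.1.symm (Fin.last k) : ℕ) - 1) := by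
            have h5 := (restrictPerm x.1).injective h1
            exact congrArg Fin.val h5
          have h4 : x.1.symm (Fin.last k) = y.1.symm (Fin.last k) := by
            have hx1 := hspos x.1 hsx
            have hy1 := hspos y.1 hsy
            apply Fin.ext
            omega
          exact Subtype.ext (restrictPerm_eq_of x.1 y.1 h2 h4)
      have hsig : Nat.card (Σ i : Fin k, {π' : Equiv.Perm (Fin k) // Cut i π'}) =
          ∑ i : Fin k, Nat.card {π' : Equiv.Perm (Fin k) // Cut i π'} := by
        letI : ∀ i : Fin k, Fintype {π' : Equiv.Perm (Fin k) // Cut i π'} :=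
          fun i => Fintype.ofFinite _
        simp only [Nat.card_eq_fintype_card]
        exact Fintype.card_sigma
      have hcut_bound : ∀ i : Fin k, Nat.card {π' : Equiv.Perm (Fin k) // Cut i π'} ≤
          ∑ r ∈ Finset.range (Module.finrank ℝ V), stirlingFirst k (k - r) := by
        intro i
        by_cases hne : Nonempty {π' : Equiv.Perm (Fin k) // Cut i π'}
        · obtain ⟨⟨π'0, hc0⟩⟩ := hne
          have hbne : b i.castSucc ≠ b (Fin.last k) := by
            simp only [hCut] at hc0
            exact hc0.1
          set u : V := b i.castSucc - b (Fin.last k) with hu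
          have hune : u ≠ 0 := sub_ne_zero.2 hbne
          set c : ℝ := a (Fin.last k) - a i.castSucc with hc
          set v₀ : V := (c / ‖u‖ ^ 2) • u with hv₀
          have hnormsq : ⟪u, u⟫_ℝ = ‖u‖ ^ 2 := real_inner_self_eq_norm_sq u
          have hucv : ⟪u, v₀⟫_ℝ = c := by
            rw [hv₀, real_inner_smul_right, hnormsq]
            have : ‖u‖ ^ 2 ≠ 0 := pow_ne_zero 2 (norm_ne_zero_iff.2 hune)
            field_simp
          have key : ∀ π' : Equiv.Perm (Fin k), Cut i π' →
              AchGen (fun j : Fin k => a j.castSucc + ⟪b j.castSucc, v₀⟫_ℝ)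
                (fun j : Fin k => (Submodule.orthogonalProjectionOnto ((ℝ ∙ u)ᗮ) (b j.castSucc))) π' := by
            intro π' hcp
            simp only [hCut] at hcp
            obtain ⟨-, w, hmono, heqw⟩ := hcp
            have huw : ⟪u, w⟫_ℝ = c := by
              rw [hu, inner_sub_left, hc]
              linarith
            have hwmem : w - v₀ ∈ (ℝ ∙ u)ᗮ := by
              rw [Submodule.mem_orthogonal_singleton_iff_inner_right, inner_sub_right, huw,
                hucv, sub_self]
            refine ⟨⟨w - v₀, hwmem⟩, ?_⟩
            have hkeyj : ∀ j : Fin k,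
                (a j.castSucc + ⟪b j.castSucc, v₀⟫_ℝ) +
                  ⟪(Submodule.orthogonalProjectionOnto ((ℝ ∙ u)ᗮ) (b j.castSucc)),
                    (⟨w - v₀, hwmem⟩ : ((ℝ ∙ u)ᗮ : Submodule ℝ V))⟫_ℝ =
                a j.castSucc + ⟪b j.castSucc, w⟫_ℝ := by
              intro j
              have h1 : ⟪(Submodule.orthogonalProjectionOnto ((ℝ ∙ u)ᗮ) (b j.castSucc)),
                  (⟨w - v₀, hwmem⟩ : ((ℝ ∙ u)ᗮ : Submodule ℝ V))⟫_ℝ =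
                  ⟪((Submodule.orthogonalProjectionOnto ((ℝ ∙ u)ᗮ) (b j.castSucc)) : V), w - v₀⟫_ℝ :=
                Submodule.coe_inner _ _ _
              have hmem2 := Submodule.sub_starProjection_mem_orthogonal (K := (ℝ ∙ u)ᗮ) (b j.castSucc)
              have h2' := Submodule.inner_right_of_mem_orthogonal hwmem hmem2
              have h2 : ⟪b j.castSucc - ((Submodule.orthogonalProjectionOnto ((ℝ ∙ u)ᗮ) (b j.castSucc)) : V),
                  w - v₀⟫_ℝ = 0 := by
                rw [real_inner_comm]
                exact h2'
              rw [h1]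
              rw [inner_sub_left, inner_sub_right] at h2
              linarith
            intro x y hxy
            have h := hmono hxy
            simp only []
            rw [hkeyj, hkeyj]
            exact h
          have hWrank : Module.finrank ℝ ((ℝ ∙ u)ᗮ : Submodule ℝ V) + 1 =
              Module.finrank ℝ V := by
            have h1 : Module.finrank ℝ (ℝ ∙ u : Submodule ℝ V) = 1 :=
              finrank_span_singleton hune
            have h2 := Submodule.finrank_add_finrank_orthogonal (K := (ℝ ∙ u : Submodule ℝ V))
            rw [h1] at h2
            omega
          have hle := ih ↥((ℝ ∙ u)ᗮ : Submodule ℝ V)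
            (fun j : Fin k => a j.castSucc + ⟪b j.castSucc, v₀⟫_ℝ)
            (fun j : Fin k => Submodule.orthogonalProjectionOnto ((ℝ ∙ u)ᗮ) (b j.castSucc))
          rw [hWrank] at hle
          refine le_trans ?_ hle
          refine Nat.card_le_card_of_injective (fun z => ⟨z.1, key z.1 z.2⟩) ?_
          intro z₁ z₂ h
          dsimp only at h
          rw [Subtype.mk.injEq] at h
          exact Subtype.ext h
        · rw [not_nonempty_iff] at hne
          haveI := hne
          simp [Nat.card_of_isEmpty]
      have hAbound := ih V (fun j : Fin k => a j.castSucc) (fun j : Fin k => b j.castSucc)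
      have hBsum : ∑ i : Fin k, Nat.card {π' : Equiv.Perm (Fin k) // Cut i π'} ≤
          k * ∑ r ∈ Finset.range (Module.finrank ℝ V), stirlingFirst k (k - r) := by
        calc ∑ i : Fin k, Nat.card {π' : Equiv.Perm (Fin k) // Cut i π'}
            ≤ ∑ _i : Fin k, ∑ r ∈ Finset.range (Module.finrank ℝ V), stirlingFirst k (k - r) :=
              Finset.sum_le_sum fun i _ => hcut_bound i
          _ = k * ∑ r ∈ Finset.range (Module.finrank ℝ V), stirlingFirst k (k - r) := by
              rw [Finset.sum_const, Finset.card_univ, Fintype.card_fin, smul_eq_mul]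
      calc Nat.card {π : Equiv.Perm (Fin (k + 1)) // AchGen a b π}
          ≤ Nat.card ({π' : Equiv.Perm (Fin k) //
              AchGen (fun j : Fin k => a j.castSucc) (fun j : Fin k => b j.castSucc) π'} ⊕
            (Σ i : Fin k, {π' : Equiv.Perm (Fin k) // Cut i π'})) := hcard1
        _ = Nat.card {π' : Equiv.Perm (Fin k) //
              AchGen (fun j : Fin k => a j.castSucc) (fun j : Fin k => b j.castSucc) π'} +
            Nat.card (Σ i : Fin k, {π' : Equiv.Perm (Fin k) // Cut i π'}) := Nat.card_sum
        _ = Nat.card {π' : Equiv.Perm (Fin k) //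
              AchGen (fun j : Fin k => a j.castSucc) (fun j : Fin k => b j.castSucc) π'} +
            ∑ i : Fin k, Nat.card {π' : Equiv.Perm (Fin k) // Cut i π'} := by rw [hsig]
        _ ≤ (∑ i ∈ Finset.range (Module.finrank ℝ V + 1), stirlingFirst k (k - i)) +
            k * ∑ r ∈ Finset.range (Module.finrank ℝ V), stirlingFirst k (k - r) :=
              add_le_add hAbound hBsum
        _ ≤ ∑ i ∈ Finset.range (Module.finrank ℝ V + 1), stirlingFirst (k + 1) (k + 1 - i) :=
              stirling_sum_step (Nat.one_le_iff_ne_zero.2 hk0)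

end StirlingAux

/-- The observed time of the event `(t i, x i)` in the frame with velocity `v`. -/
def obsTime {n k : ℕ} (t : Fin k → ℝ) (x : Fin k → EuclideanSpace ℝ (Fin n))
    (v : EuclideanSpace ℝ (Fin n)) (i : Fin k) : ℝ :=
  t i - ⟪x i, v⟫_ℝ

/-- A permutation `π` is an achievable order of the events `(t i, x i)`. -/
def Achievable {n k : ℕ} (t : Fin k → ℝ) (x : Fin k → EuclideanSpace ℝ (Fin n))
    (π : Equiv.Perm (Fin k)) : Prop :=
  ∃ v : EuclideanSpace ℝ (Fin n), ‖v‖ < 1 ∧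
    StrictMono fun m : Fin k => obsTime t x v (π m)

/-- **Theorem 2 (inequality part).** For `k` pairwise spacelike separated
events in `ℝ^{1,n}`, the number of achievable orders is at most
`c(k,k) + c(k,k-1) + ⋯ + c(k,k-n)`. -/
theorem number_of_orders_le_sum_stirling
    (n k : ℕ) (t : Fin k → ℝ) (x : Fin k → EuclideanSpace ℝ (Fin n))
    (hsep : ∀ i j : Fin k, i ≠ j → (t i - t j) ^ 2 < ‖x i - x j‖ ^ 2) :
    Nat.card {π : Equiv.Perm (Fin k) // Achievable t x π}
      ≤ ∑ i ∈ Finset.range (n + 1), stirlingFirst k (k - i) := by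
  classical
  have hconv : ∀ π : Equiv.Perm (Fin k), Achievable t x π →
      StirlingAux.AchGen t (fun i => -x i) π := by
    rintro π ⟨v, -, hmono⟩
    refine ⟨v, ?_⟩
    have hfun : (fun m : Fin k => t (π m) + ⟪(fun i : Fin k => -x i) (π m), v⟫_ℝ) =
        fun m : Fin k => obsTime t x v (π m) := by
      funext m
      simp [obsTime, inner_neg_left, sub_eq_add_neg]
    show StrictMono fun m : Fin k => t (π m) + ⟪(fun i : Fin k => -x i) (π m), v⟫_ℝ
    rw [hfun]
    exact hmono
  have h1 : Nat.card {π : Equiv.Perm (Fin k) // Achievable t x π} ≤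
      Nat.card {π : Equiv.Perm (Fin k) // StirlingAux.AchGen t (fun i => -x i) π} := by
    refine Nat.card_le_card_of_injective (fun y => ⟨y.1, hconv y.1 y.2⟩) ?_
    intro z₁ z₂ h
    dsimp only at h
    rw [Subtype.mk.injEq] at h
    exact Subtype.ext h
  refine h1.trans ?_
  have h2 := StirlingAux.achGen_card_le k (EuclideanSpace ℝ (Fin n)) t (fun i => -x i)
  rwa [finrank_euclideanSpace_fin] at h2
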